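/- arXiv:1907.02458 — 2 statements merged into one kernel-verified Lean document; each statement's English description precedes it below -/
import Mathlib

section
/- Let (E_k)_{k≥0} be a nondecreasing sequence of nonnegative reals tending to +∞. If liminf_{k→∞} E_k / (ln k)^q > 0 for some q > 2, then lim_{λ→0⁺} (∑_{k=0}^∞ e^{−λ E_k})^λ = 1. -/
open Filter Real Topology

private lemma aux_term_bound (E : ℕ → ℝ) (c q l : ℝ) (hc : 0 < c) (hq : 2 < q)
    (N : ℕ) (hN : ∀ k, N ≤ k → c * (Real.log k) ^ q ≤ E k) (hl : 0 < l)
    (k : ℕ) (hkN : N ≤ k) (hk3 : 3 ≤ k)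
    (hlog : (2 / (l * c)) ^ (1 / (q - 1)) ≤ Real.log k) :
    Real.exp (-l * E k) ≤ 1 / (k : ℝ) ^ 2 := by
  have hk0 : (0:ℝ) < k := by exact_mod_cast Nat.lt_of_lt_of_le (by norm_num) hk3
  have hlogpos : 0 < Real.log k := Real.log_pos (by exact_mod_cast Nat.lt_of_lt_of_le (by norm_num) hk3)
  have hq1 : (0:ℝ) < q - 1 := by linarith
  have hlc : 0 < l * c := mul_pos hl hc
  have hbase : (0:ℝ) ≤ 2 / (l * c) := by positivity
  have h1 : 2 / (l * c) ≤ (Real.log k) ^ (q - 1) := by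
    have := Real.rpow_le_rpow (Real.rpow_nonneg hbase _) hlog hq1.le
    rwa [← Real.rpow_mul hbase, one_div_mul_cancel hq1.ne', Real.rpow_one] at this
  have h2 : 2 ≤ l * c * (Real.log k) ^ (q - 1) := by
    rw [div_le_iff₀ hlc] at h1; linarith [h1]
  have hrw : (Real.log k) ^ (q - 1) * Real.log k = (Real.log k) ^ q := by
    calc (Real.log k) ^ (q - 1) * Real.log k
        = (Real.log k) ^ (q - 1) * (Real.log k) ^ (1:ℝ) := by rw [Real.rpow_one]
      _ = (Real.log k) ^ (q - 1 + 1) := (Real.rpow_add hlogpos _ _).symm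
      _ = (Real.log k) ^ q := by ring_nf
  have h3 : 2 * Real.log k ≤ l * c * (Real.log k) ^ q := by
    have := mul_le_mul_of_nonneg_right h2 hlogpos.le
    calc 2 * Real.log k ≤ l * c * (Real.log k) ^ (q-1) * Real.log k := this
      _ = l * c * ((Real.log k) ^ (q-1) * Real.log k) := by ring
      _ = l * c * (Real.log k) ^ q := by rw [hrw]
  have h4 : 2 * Real.log k ≤ l * E k := by
    have := mul_le_mul_of_nonneg_left (hN k hkN) hl.le
    calc 2 * Real.log k ≤ l * c * (Real.log k) ^ q := h3
      _ = l * (c * (Real.log k) ^ q) := by ring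
      _ ≤ l * E k := this
  calc Real.exp (-l * E k) ≤ Real.exp (-(2 * Real.log k)) :=
        Real.exp_le_exp.2 (by linarith)
    _ = 1 / (k : ℝ) ^ 2 := by
        rw [Real.exp_neg, two_mul, Real.exp_add, Real.exp_log hk0, one_div, sq]

private lemma aux_g_summable : Summable (fun n : ℕ => 1 / ((n:ℝ) + 1) ^ 2) := by
  have h : Summable (fun n : ℕ => 1 / ((n:ℝ)) ^ 2) := summable_one_div_nat_pow.2 one_lt_two
  have := (summable_nat_add_iff 1).2 h
  refine this.congr fun n => ?_
  push_cast; ring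

private lemma aux_sum_bound (E : ℕ → ℝ) (hpos : ∀ k, 0 ≤ E k) (c q : ℝ)
    (hc : 0 < c) (hq : 2 < q) (N : ℕ)
    (hN : ∀ k, N ≤ k → c * (Real.log k) ^ q ≤ E k)
    (l : ℝ) (hl : 0 < l) :
    Summable (fun k : ℕ => Real.exp (-l * E k)) ∧
      (∑' k : ℕ, Real.exp (-l * E k)) ≤
        ((max N (⌈Real.exp ((2 / (l * c)) ^ (1 / (q - 1)))⌉₊ + 3) : ℕ) : ℝ) +
          ∑' n : ℕ, 1 / ((n:ℝ) + 1) ^ 2 := by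
  set b := (2 / (l * c)) ^ (1 / (q - 1)) with hb
  set M := max N (⌈Real.exp b⌉₊ + 3) with hM
  have hM3 : 3 ≤ M := le_max_of_le_right (by omega)
  have hkey : ∀ k, M ≤ k → Real.exp (-l * E k) ≤ 1 / (k : ℝ) ^ 2 := by
    intro k hk
    have hkN : N ≤ k := le_trans (le_max_left _ _) hk
    have hk3 : 3 ≤ k := le_trans hM3 hk
    have hceil : (⌈Real.exp b⌉₊ : ℕ) ≤ k := le_trans (le_max_of_le_right (by omega)) hk
    have hlog : b ≤ Real.log k := by
      have h1 : Real.exp b ≤ (k : ℝ) := le_trans (Nat.le_ceil _) (by exact_mod_cast hceil)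
      have := Real.log_le_log (Real.exp_pos b) h1
      rwa [Real.log_exp] at this
    exact aux_term_bound E c q l hc hq N hN hl k hkN hk3 hlog
  have htail_le : ∀ n : ℕ, Real.exp (-l * E (n + M)) ≤ 1 / ((n:ℝ) + 1) ^ 2 := by
    intro n
    have h1 : Real.exp (-l * E (n + M)) ≤ 1 / ((n + M : ℕ) : ℝ) ^ 2 :=
      hkey _ (by omega)
    refine le_trans h1 ?_
    have h2 : ((n:ℝ) + 1) ≤ ((n + M : ℕ) : ℝ) := by push_cast; norm_num; omega
    have h3 : (0:ℝ) < (n:ℝ) + 1 := by positivity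
    gcongr
  have htail_sum : Summable (fun n : ℕ => Real.exp (-l * E (n + M))) :=
    Summable.of_nonneg_of_le (fun n => (Real.exp_pos _).le) htail_le aux_g_summable
  have hsum : Summable (fun k : ℕ => Real.exp (-l * E k)) :=
    (summable_nat_add_iff M).1 htail_sum
  refine ⟨hsum, ?_⟩
  rw [← hsum.sum_add_tsum_nat_add M]
  have hhead : ∑ i ∈ Finset.range M, Real.exp (-l * E i) ≤ (M : ℝ) := by
    calc ∑ i ∈ Finset.range M, Real.exp (-l * E i)
        ≤ ∑ i ∈ Finset.range M, 1 := by
          refine Finset.sum_le_sum fun i _ => ?_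
          rw [← Real.exp_zero]
          exact Real.exp_le_exp.2 (by nlinarith [hpos i, hl])
      _ = (M : ℝ) := by simp
  have htail : (∑' n : ℕ, Real.exp (-l * E (n + M))) ≤ ∑' n : ℕ, 1 / ((n:ℝ) + 1) ^ 2 :=
    Summable.tsum_le_tsum htail_le htail_sum aux_g_summable
  exact add_le_add hhead htail


theorem Hcond_plus_of_growth (E : ℕ → ℝ)
    (hmono : Monotone E) (hpos : ∀ k, 0 ≤ E k)
    (htop : Filter.Tendsto E Filter.atTop Filter.atTop)
    (hgrowth : ∃ q : ℝ, 2 < q ∧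
      0 < Filter.atTop.liminf (fun k : ℕ => E k / (Real.log k) ^ q)) :
    Filter.Tendsto (fun l : ℝ => (∑' k : ℕ, Real.exp (-l * E k)) ^ l)
      (nhdsWithin 0 (Set.Ioi 0)) (nhds 1) := by
  obtain ⟨q, hq, hlim⟩ := hgrowth
  -- Step 1: extract growth constants
  obtain ⟨c, hc, N, hN⟩ : ∃ c : ℝ, 0 < c ∧ ∃ N : ℕ, ∀ k, N ≤ k → c * (Real.log k) ^ q ≤ E k := by
    set L := Filter.atTop.liminf (fun k : ℕ => E k / (Real.log k) ^ q) with hL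
    refine ⟨L / 2, half_pos hlim, ?_⟩
    have hbdd : Filter.IsBoundedUnder (· ≥ ·) Filter.atTop
        (fun k : ℕ => E k / (Real.log k) ^ q) :=
      Filter.isBoundedUnder_of ⟨0, fun k =>
        div_nonneg (hpos k) (Real.rpow_nonneg (Real.log_natCast_nonneg k) q)⟩
    have hev : ∀ᶠ k : ℕ in atTop, L / 2 < E k / (Real.log k) ^ q :=
      Filter.eventually_lt_of_lt_liminf (half_lt_self hlim) hbdd
    have hev3 : ∀ᶠ k : ℕ in atTop, 3 ≤ k := eventually_ge_atTop 3
    obtain ⟨N, hN⟩ := (hev.and hev3).exists_forall_of_atTop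
    refine ⟨N, fun k hk => ?_⟩
    obtain ⟨h1, h2⟩ := hN k hk
    have hlogpos : 0 < Real.log k :=
      Real.log_pos (by exact_mod_cast Nat.lt_of_lt_of_le (by norm_num) h2)
    have hd : 0 < (Real.log k) ^ q := Real.rpow_pos_of_pos hlogpos q
    exact ((lt_div_iff₀ hd).1 h1).le
  set s := 1 / (q - 1) with hs
  have hq1 : (0:ℝ) < q - 1 := by linarith
  have hs0 : 0 < s := by positivity
  have hs1 : s < 1 := by
    rw [hs, div_lt_one hq1]; linarith
  set T := ∑' n : ℕ, 1 / ((n:ℝ) + 1) ^ 2 with hT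
  have hT0 : 0 ≤ T := tsum_nonneg fun n => by positivity
  set C := (N : ℝ) + 4 + T with hC
  have hC0 : (1:ℝ) ≤ C := by have : (0:ℝ) ≤ (N:ℝ) := Nat.cast_nonneg N; linarith
  set Z := fun l : ℝ => ∑' k : ℕ, Real.exp (-l * E k) with hZ
  -- basic facts for l > 0
  have hfacts : ∀ l : ℝ, 0 < l → Real.exp (-l * E 0) ≤ Z l ∧
      Real.log (Z l) ≤ (2 / (l * c)) ^ s + Real.log (1 + C) := by
    intro l hl
    obtain ⟨hsum, hbound⟩ := aux_sum_bound E hpos c q hc hq N hN l hl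
    have hlow : Real.exp (-l * E 0) ≤ Z l :=
      Summable.le_tsum hsum 0 fun j _ => (Real.exp_pos _).le
    refine ⟨hlow, ?_⟩
    set b := (2 / (l * c)) ^ s with hb
    have hb0 : 0 ≤ b := Real.rpow_nonneg (by positivity) _
    have heb : (1:ℝ) ≤ Real.exp b := by
      rw [← Real.exp_zero]; exact Real.exp_le_exp.2 hb0
    have hMle : ((max N (⌈Real.exp b⌉₊ + 3) : ℕ) : ℝ) ≤ Real.exp b + ((N:ℝ) + 4) := by
      have h1 : (max N (⌈Real.exp b⌉₊ + 3) : ℕ) ≤ N + (⌈Real.exp b⌉₊ + 3) := by omega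
      have h2 : (⌈Real.exp b⌉₊ : ℝ) ≤ Real.exp b + 1 :=
        (Nat.ceil_lt_add_one (Real.exp_pos b).le).le
      calc ((max N (⌈Real.exp b⌉₊ + 3) : ℕ) : ℝ) ≤ ((N + (⌈Real.exp b⌉₊ + 3) : ℕ) : ℝ) := by
            exact_mod_cast h1
        _ = (N:ℝ) + (⌈Real.exp b⌉₊ : ℝ) + 3 := by push_cast; ring
        _ ≤ Real.exp b + ((N:ℝ) + 4) := by linarith
    have hZle : Z l ≤ Real.exp b * (1 + C) := by
      have : Z l ≤ Real.exp b + C := by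
        rw [hC]
        calc Z l ≤ ((max N (⌈Real.exp b⌉₊ + 3) : ℕ) : ℝ) + T := hbound
          _ ≤ Real.exp b + ((N:ℝ) + 4) + T := by linarith
          _ = Real.exp b + ((N:ℝ) + 4 + T) := by ring
      nlinarith [Real.exp_pos b]
    have hZpos : 0 < Z l := lt_of_lt_of_le (Real.exp_pos _) hlow
    calc Real.log (Z l) ≤ Real.log (Real.exp b * (1 + C)) := Real.log_le_log hZpos hZle
      _ = b + Real.log (1 + C) := by
          rw [Real.log_mul (Real.exp_pos b).ne' (by linarith), Real.log_exp]
  -- Step 2: λ log Z → 0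
  have hmain : Tendsto (fun l : ℝ => Real.log (Z l) * l) (𝓝[>] 0) (𝓝 0) := by
    have hlower : Tendsto (fun l : ℝ => -l * E 0 * l) (𝓝[>] 0) (𝓝 0) := by
      have hcont : Continuous fun l : ℝ => -l * E 0 * l := by continuity
      have : Tendsto (fun l : ℝ => -l * E 0 * l) (𝓝 0) (𝓝 (-(0:ℝ) * E 0 * 0)) :=
        hcont.tendsto 0
      simpa using this.mono_left nhdsWithin_le_nhds
    have hupper : Tendsto (fun l : ℝ => ((2 / (l * c)) ^ s + Real.log (1 + C)) * l)
        (𝓝[>] 0) (𝓝 0) := by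
      have h1 : Tendsto (fun l : ℝ => (2 / c) ^ s * l ^ (1 - s) + Real.log (1 + C) * l)
          (𝓝[>] 0) (𝓝 0) := by
        have ha : Tendsto (fun l : ℝ => l ^ (1 - s)) (𝓝 0) (𝓝 0) := by
          have := (Real.continuousAt_rpow_const 0 (1 - s) (Or.inr (by linarith))).tendsto
          rwa [Real.zero_rpow (by linarith : (1:ℝ) - s ≠ 0)] at this
        have hb : Tendsto (fun l : ℝ => (2 / c) ^ s * l ^ (1 - s) + Real.log (1 + C) * l)
            (𝓝 0) (𝓝 ((2 / c) ^ s * 0 + Real.log (1 + C) * 0)) :=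
          ((ha.const_mul _).add ((continuous_const.mul continuous_id).tendsto 0))
        simpa using hb.mono_left nhdsWithin_le_nhds
      refine h1.congr' ?_
      filter_upwards [self_mem_nhdsWithin] with l (hl : 0 < l)
      have hrw : (2 / (l * c)) ^ s = (2 / c) ^ s / l ^ s := by
        rw [show 2 / (l * c) = (2 / c) / l by field_simp,
          Real.div_rpow (by positivity) hl.le]
      have hls : (0:ℝ) < l ^ s := Real.rpow_pos_of_pos hl s
      have key : (2 / (l * c)) ^ s * l = (2 / c) ^ s * l ^ ((1:ℝ) - s) := by
        rw [hrw, Real.rpow_sub hl, Real.rpow_one]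
        field_simp
      rw [add_mul, key]
    refine tendsto_of_tendsto_of_tendsto_of_le_of_le' hlower hupper ?_ ?_
    · filter_upwards [self_mem_nhdsWithin] with l (hl : 0 < l)
      obtain ⟨hlow, _⟩ := hfacts l hl
      have hZpos : 0 < Z l := lt_of_lt_of_le (Real.exp_pos _) hlow
      have : -l * E 0 ≤ Real.log (Z l) := by
        have := Real.log_le_log (Real.exp_pos _) hlow
        rwa [Real.log_exp] at this
      exact mul_le_mul_of_nonneg_right this hl.le
    · filter_upwards [self_mem_nhdsWithin] with l (hl : 0 < l)
      exact mul_le_mul_of_nonneg_right (hfacts l hl).2 hl.le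
  -- Step 3: conclude
  have hfinal : Tendsto (fun l : ℝ => Real.exp (Real.log (Z l) * l)) (𝓝[>] 0) (𝓝 1) := by
    have := (Real.continuous_exp.tendsto 0).comp hmain
    simpa [Function.comp_def] using this
  refine hfinal.congr' ?_
  filter_upwards [self_mem_nhdsWithin] with l (hl : 0 < l)
  have hZpos : 0 < Z l := lt_of_lt_of_le (Real.exp_pos _) (hfacts l hl).1
  exact (Real.rpow_def_of_pos hZpos l).symm
end

section
/- Let f be a real-valued function on a convex subset S of a real vector space satisfying −a·h₂(p) ≤ f(p·ρ + (1−p)·σ) − p·f(ρ) − (1−p)·f(σ) ≤ b·h₂(p) for all ρ, σ ∈ S and p ∈ (0,1), where a, b ≥ 0 and h₂ is the binary entropy. Suppose ρ, ϱ, σ₁, σ₂ ∈ S and t ∈ (0,1] satisfy (1/(1+t))·ρ + (t/(1+t))·σ₁ = (1/(1+t))·ϱ + (t/(1+t))·σ₂. Then |f(ϱ) − f(ρ)| ≤ t·|f(σ₂) − f(σ₁)| + (a+b)·g(t), where g(t) = (1+t)·h₂(t/(1+t)). -/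
noncomputable def g (x : ℝ) : ℝ := (x + 1) * Real.log (x + 1) - x * Real.log x

noncomputable def h2 (p : ℝ) : ℝ := -(p * Real.log p) - (1 - p) * Real.log (1 - p)

theorem afw_core_step {V : Type*} [AddCommGroup V] [Module ℝ V]
    (S : Set V) (hS : Convex ℝ S) (f : V → ℝ) (a b : ℝ) (ha : 0 ≤ a) (hb : 0 ≤ b)
    (hf : ∀ ρ ∈ S, ∀ σ ∈ S, ∀ p ∈ Set.Ioo (0 : ℝ) 1,
      -(a * h2 p) ≤ f (p • ρ + (1 - p) • σ) - p * f ρ - (1 - p) * f σ ∧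
      f (p • ρ + (1 - p) • σ) - p * f ρ - (1 - p) * f σ ≤ b * h2 p)
    (ρ ϱ σ₁ σ₂ : V) (hρ : ρ ∈ S) (hϱ : ϱ ∈ S) (hσ₁ : σ₁ ∈ S) (hσ₂ : σ₂ ∈ S)
    (t : ℝ) (ht : t ∈ Set.Ioc (0 : ℝ) 1)
    (hid : (1 / (1 + t)) • ρ + (t / (1 + t)) • σ₁
         = (1 / (1 + t)) • ϱ + (t / (1 + t)) • σ₂) :
    |f ϱ - f ρ| ≤ t * |f σ₂ - f σ₁| + (a + b) * g t := by
  obtain ⟨ht0, ht1⟩ := ht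
  have h1t : (0:ℝ) < 1 + t := by linarith
  set p : ℝ := 1 / (1 + t) with hp
  have hp0 : 0 < p := by positivity
  have hp1 : p < 1 := by rw [hp, div_lt_one h1t]; linarith
  have h1p : 1 - p = t / (1 + t) := by rw [hp]; field_simp; ring
  set X : ℝ := f ϱ - f ρ with hX
  set Y : ℝ := f σ₂ - f σ₁ with hY
  have hid' : p • ρ + (1 - p) • σ₁ = p • ϱ + (1 - p) • σ₂ := by
    rw [h1p]; exact hid
  have hA := hf ρ hρ σ₁ hσ₁ p ⟨hp0, hp1⟩
  have hB := hf ϱ hϱ σ₂ hσ₂ p ⟨hp0, hp1⟩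
  rw [hid'] at hA
  have key : |p * X + (1 - p) * Y| ≤ (a + b) * h2 p := by
    rw [abs_le]
    constructor
    · nlinarith [hA.1, hB.2]
    · nlinarith [hA.2, hB.1]
  have e1 : p * (1 + t) = 1 := by rw [hp]; field_simp
  have e2 : (1 - p) * (1 + t) = t := by rw [h1p]; field_simp
  have key2 : |X + t * Y| ≤ (1 + t) * ((a + b) * h2 p) := by
    have hrw : X + t * Y = (1 + t) * (p * X + (1 - p) * Y) := by
      linear_combination (-X) * e1 + (-Y) * e2
    rw [hrw, abs_mul, abs_of_pos h1t]
    exact mul_le_mul_of_nonneg_left key h1t.le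
  have hlogp : Real.log p = - Real.log (1 + t) := by
    rw [hp, one_div, Real.log_inv]
  have hlog1p : Real.log (1 - p) = Real.log t - Real.log (1 + t) := by
    rw [h1p, Real.log_div ht0.ne' h1t.ne']
  have hg : g t = (1 + t) * h2 p := by
    unfold g h2
    rw [hlogp, hlog1p, h1p, hp]
    have h1 : t + 1 = 1 + t := by ring
    rw [h1]
    field_simp
    ring
  have htri : |X| ≤ |X + t * Y| + |t * Y| := by
    have : |(X + t * Y) - t * Y| ≤ |X + t * Y| + |t * Y| := abs_sub _ _
    simpa using this
  rw [abs_mul, abs_of_pos ht0] at htri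
  rw [hg]
  linarith
end
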